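/- Let d be a positive integer, let ρ : ℝ^d → ℝ be a positive function, let r > 0 and C_sm > 0, and suppose ρ satisfies self-majorization of order r with constant C_sm. Then ρ satisfies (1-ε)-slow growth with ε = 1/(r+1) and constant C_sg = max( 2^r/C_sm , (2^r/C_sm)^{1/(1+r)} ); that is, for all x, α ∈ ℝ^d, ρ(α) ≤ C_sg · ρ(x) · (1 + |x-α|/ρ(x))^{r/(r+1)}. -/

import Mathlib

open Real

/-- If a positive function `ρ` on `ℝ^d` satisfies self-majorization of order
`r` with constant `C_sm`, then it satisfies `(1-ε)`-slow growth with `ε = 1/(r+1)` and constant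
`C_sg = max (2^r/C_sm) ((2^r/C_sm)^(1/(1+r)))`; i.e. the growth exponent is
`1 - 1/(r+1) = r/(r+1)`. -/
theorem self_majorization_implies_slow_growth
    (d : ℕ) (hd : 0 < d) (ρ : EuclideanSpace ℝ (Fin d) → ℝ) (hρ : ∀ x, 0 < ρ x)
    (r : ℝ) (hr : 0 < r) (Csm : ℝ) (hCsm : 0 < Csm)
    (hsm : ∀ x y, ρ y ≥ Csm * ρ x * (1 + ‖x - y‖ / ρ x) ^ (-r)) :
    ∀ x α, ρ α ≤
      max ((2 : ℝ) ^ r / Csm) (((2 : ℝ) ^ r / Csm) ^ (1 / (1 + r))) *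
        ρ x * (1 + ‖x - α‖ / ρ x) ^ (r / (r + 1)) := by
  intro x α
  have hρx := hρ x
  have hρα := hρ α
  set t := ‖x - α‖ with ht
  have ht0 : 0 ≤ t := norm_nonneg _
  have h1r : (0:ℝ) < 1 + r := by linarith
  set A := (2:ℝ)^r / Csm with hA
  have hA0 : 0 < A := div_pos (rpow_pos_of_pos two_pos r) hCsm
  have hB0 : (0:ℝ) < 1 + t / ρ α := by positivity
  have hbase : (1:ℝ) ≤ 1 + t / ρ x := by
    have : 0 ≤ t / ρ x := by positivity
    linarith
  have hpow1 : (1:ℝ) ≤ (1 + t / ρ x) ^ (r / (r+1)) :=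
    one_le_rpow hbase (by positivity)
  -- key inequality
  have hkey : ρ α ≤ ρ x / Csm * (1 + t / ρ α) ^ r := by
    have h := hsm α x
    rw [show ‖α - x‖ = t from norm_sub_rev α x] at h
    rw [rpow_neg hB0.le, ← div_eq_mul_inv] at h
    have hpow : 0 < (1 + t / ρ α) ^ r := rpow_pos_of_pos hB0 r
    rw [ge_iff_le, div_le_iff₀ hpow] at h
    calc ρ α = Csm * ρ α / Csm := by field_simp
    _ ≤ ρ x * (1 + t / ρ α) ^ r / Csm := div_le_div_of_nonneg_right h hCsm.le
    _ = ρ x / Csm * (1 + t / ρ α) ^ r := by ring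
  rcases le_or_gt t (ρ α) with hle | hlt
  · -- case t ≤ ρ α
    have hB2 : 1 + t / ρ α ≤ 2 := by
      have : t / ρ α ≤ 1 := (div_le_one hρα).mpr hle
      linarith
    have hBr : (1 + t / ρ α) ^ r ≤ (2:ℝ) ^ r :=
      rpow_le_rpow hB0.le hB2 hr.le
    have h1 : ρ α ≤ A * ρ x := by
      calc ρ α ≤ ρ x / Csm * (1 + t / ρ α) ^ r := hkey
      _ ≤ ρ x / Csm * (2:ℝ)^r := mul_le_mul_of_nonneg_left hBr (by positivity)
      _ = A * ρ x := by rw [hA]; ring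
    calc ρ α ≤ A * ρ x := h1
    _ = A * ρ x * 1 := by ring
    _ ≤ max A (A ^ (1/(1+r))) * ρ x * (1 + t / ρ x) ^ (r/(r+1)) := by
        apply mul_le_mul (mul_le_mul_of_nonneg_right (le_max_left _ _) hρx.le) hpow1
          zero_le_one (by positivity)
  · -- case ρ α < t
    have ht0' : 0 < t := hρα.trans hlt
    have hB2 : 1 + t / ρ α ≤ 2 * t / ρ α := by
      rw [mul_div_assoc, two_mul]
      have : (1:ℝ) ≤ t / ρ α := (one_le_div hρα).mpr hlt.le
      linarith
    have hBr : (1 + t / ρ α) ^ r ≤ (2 * t / ρ α) ^ r :=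
      rpow_le_rpow hB0.le hB2 hr.le
    have hstep : ρ α * ρ α ^ r ≤ A * ρ x * t ^ r := by
      have h2 : ρ α ≤ ρ x / Csm * ((2*t/ρ α) ^ r) :=
        hkey.trans (mul_le_mul_of_nonneg_left hBr (by positivity))
      have hexp : (2*t/ρ α) ^ r = 2^r * t^r / ρ α ^ r := by
        rw [div_rpow (by positivity) hρα.le, mul_rpow (by norm_num) ht0]
      rw [hexp] at h2
      have hραr : 0 < ρ α ^ r := rpow_pos_of_pos hρα r
      calc ρ α * ρ α ^ r ≤ (ρ x / Csm * (2^r * t^r / ρ α ^ r)) * ρ α ^ r :=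
            mul_le_mul_of_nonneg_right h2 hραr.le
      _ = A * ρ x * t ^ r := by rw [hA]; field_simp
    have hpow15 : ρ α ^ (1 + r) ≤ A * ρ x * t ^ r := by
      rw [rpow_add hρα, rpow_one]; exact hstep
    have hfin : ρ α ≤ (A * ρ x * t ^ r) ^ (1/(1+r)) := by
      have h := rpow_le_rpow (rpow_nonneg hρα.le _) hpow15
        (by positivity : (0:ℝ) ≤ 1/(1+r))
      rwa [← rpow_mul hρα.le, mul_one_div, div_self h1r.ne', rpow_one] at h
    have hexpand : (A * ρ x * t ^ r) ^ (1/(1+r))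
        = A ^ (1/(1+r)) * ρ x ^ (1/(1+r)) * t ^ (r/(1+r)) := by
      rw [mul_rpow (by positivity) (by positivity),
          mul_rpow hA0.le hρx.le, ← rpow_mul ht0, mul_one_div]
    have htle : t ≤ ρ x * (1 + t / ρ x) := by
      rw [mul_add, mul_one, mul_div_cancel₀ _ hρx.ne']
      linarith
    have htpow : t ^ (r/(1+r)) ≤ ρ x ^ (r/(1+r)) * (1 + t / ρ x) ^ (r/(1+r)) := by
      calc t ^ (r/(1+r)) ≤ (ρ x * (1 + t / ρ x)) ^ (r/(1+r)) :=
            rpow_le_rpow ht0 htle (by positivity)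
      _ = ρ x ^ (r/(1+r)) * (1 + t / ρ x) ^ (r/(1+r)) :=
            mul_rpow hρx.le (by positivity)
    have hρcomb : ρ x ^ (1/(1+r)) * ρ x ^ (r/(1+r)) = ρ x := by
      rw [← rpow_add hρx, ← add_div, div_self h1r.ne', rpow_one]
    calc ρ α ≤ A ^ (1/(1+r)) * ρ x ^ (1/(1+r)) * t ^ (r/(1+r)) :=
          hfin.trans_eq hexpand
    _ ≤ A ^ (1/(1+r)) * ρ x ^ (1/(1+r)) *
          (ρ x ^ (r/(1+r)) * (1 + t / ρ x) ^ (r/(1+r))) :=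
        mul_le_mul_of_nonneg_left htpow (by positivity)
    _ = A ^ (1/(1+r)) * (ρ x ^ (1/(1+r)) * ρ x ^ (r/(1+r))) *
          (1 + t / ρ x) ^ (r/(1+r)) := by ring
    _ = A ^ (1/(1+r)) * ρ x * (1 + t / ρ x) ^ (r/(1+r)) := by rw [hρcomb]
    _ ≤ max A (A ^ (1/(1+r))) * ρ x * (1 + t / ρ x) ^ (r/(r+1)) := by
        rw [show r/(1+r) = r/(r+1) from by rw [add_comm 1 r]]
        exact mul_le_mul_of_nonneg_right
          (mul_le_mul_of_nonneg_right (le_max_right _ _) hρx.le) (by positivity)
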